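/- Let A be the 4×4 matrix with rows (0,0,1,−i), (2,0,0,0), (0,1,1/√2, i/√2), (0,−i, i/√2, −1/√2). Then rank(A*A − AA*) = 2, but A has no normal 5×5 completion; i.e., the rank condition rank(A*A−AA*)=2 is necessary but not sufficient for normal defect one. -/

import Mathlib

open Matrix Complex

noncomputable def A11 : Matrix (Fin 4) (Fin 4) ℂ :=
  !![0, 0, 1, -I;
     2, 0, 0, 0;
     0, 1, 1 / (Real.sqrt 2 : ℂ), I / (Real.sqrt 2 : ℂ);
     0, -I, I / (Real.sqrt 2 : ℂ), -(1 / (Real.sqrt 2 : ℂ))]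

set_option linter.unreachableTactic false
set_option linter.unusedTactic false

theorem stmt11 :
    (A11ᴴ * A11 - A11 * A11ᴴ).rank = 2 ∧
    ¬ ∃ B : Matrix (Fin 5) (Fin 5) ℂ, Bᴴ * B = B * Bᴴ ∧
        ∀ i j : Fin 4, B (Fin.castLE (by norm_num) i) (Fin.castLE (by norm_num) j)
          = A11 i j := by
  constructor
  · have hD : A11ᴴ * A11 - A11 * A11ᴴ = Matrix.diagonal ![2,-2,0,0] := by
      have h2 : ((Real.sqrt 2 : ℝ):ℂ) * ((Real.sqrt 2:ℝ):ℂ) = 2 := by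
        norm_cast; exact Real.mul_self_sqrt (by norm_num)
      have hsq : ((Real.sqrt 2 : ℝ):ℂ)^2 = 2 := by rw [sq]; exact h2
      have hne : ((Real.sqrt 2 : ℝ):ℂ) ≠ 0 := by
        intro h; rw [h] at h2; norm_num at h2
      ext i j
      rw [Matrix.sub_apply, Matrix.mul_apply, Matrix.mul_apply]
      fin_cases i <;> fin_cases j <;>
        simp only [Fin.sum_univ_four, Matrix.conjTranspose_apply, A11, Fin.isValue,
          Matrix.cons_val', Matrix.cons_val_zero, Matrix.cons_val_one, Matrix.head_cons,
          Matrix.empty_val', Matrix.cons_val_fin_one,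
          Matrix.cons_val_two, Matrix.cons_val_three, Matrix.tail_cons, Matrix.diagonal,
          Matrix.of_apply, map_zero, _root_.map_one, map_ofNat, Complex.conj_I, map_neg,
          map_div₀, Complex.conj_ofReal] <;>
        field_simp <;> ring_nf <;>
        first
          | rfl
          | (simp [Complex.I_sq]; done)
          | (simp only [hsq]; ring_nf)
          | (simp only [hsq]; norm_num)
          | (simp [Complex.I_sq] <;> ring_nf <;> simp [Complex.I_sq, hsq] <;> ring_nf)
    rw [hD, Matrix.rank_diagonal, Fintype.card_subtype]
    have : (Finset.univ.filter fun i => ![(2:ℂ),-2,0,0] i ≠ 0) = {0, 1} := by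
      ext i; fin_cases i <;> simp <;> norm_num
    rw [this]; decide
  ·
    rintro ⟨B, hnorm, hB⟩
    have hent : ∀ i j : Fin 5,
        ∑ k, (starRingEnd ℂ) (B k i) * B k j = ∑ k, B i k * (starRingEnd ℂ) (B j k) := by
      intro i j
      have := congrFun (congrFun hnorm i) j
      simpa [Matrix.mul_apply, Matrix.conjTranspose_apply] using this
    -- block entries
    have b00 : B 0 0 = 0 := by simpa [A11] using hB 0 0
    have b01 : B 0 1 = 0 := by simpa [A11] using hB 0 1
    have b02 : B 0 2 = 1 := by simpa [A11] using hB 0 2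
    have b03 : B 0 3 = -I := by simpa [A11] using hB 0 3
    have b10 : B 1 0 = 2 := by simpa [A11] using hB 1 0
    have b11 : B 1 1 = 0 := by simpa [A11] using hB 1 1
    have b12 : B 1 2 = 0 := by simpa [A11] using hB 1 2
    have b13 : B 1 3 = 0 := by simpa [A11] using hB 1 3
    have b20 : B 2 0 = 0 := by simpa [A11] using hB 2 0
    have b21 : B 2 1 = 1 := by simpa [A11] using hB 2 1
    have b22 : B 2 2 = 1 / (Real.sqrt 2 : ℂ) := by simpa [A11] using hB 2 2
    have b23 : B 2 3 = I / (Real.sqrt 2 : ℂ) := by simpa [A11] using hB 2 3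
    have b30 : B 3 0 = 0 := by simpa [A11] using hB 3 0
    have b31 : B 3 1 = -I := by simpa [A11] using hB 3 1
    have b32 : B 3 2 = I / (Real.sqrt 2 : ℂ) := by simpa [A11] using hB 3 2
    have b33 : B 3 3 = -(1 / (Real.sqrt 2 : ℂ)) := by simpa [A11] using hB 3 3
    set u0 := B 0 4 with hu0def
    set u2 := B 2 4 with hu2def
    set u3 := B 3 4 with hu3def
    set w0 := B 4 0 with hw0def
    set w1 := B 4 1 with hw1def
    set w2 := B 4 2 with hw2def
    set w3 := B 4 3 with hw3def
    set c := B 4 4 with hcdef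
    have e00 := hent 0 0
    have e22 := hent 2 2
    have e33 := hent 3 3
    have e02 := hent 0 2
    have e03 := hent 0 3
    have e24 := hent 2 4
    have e34 := hent 3 4
    simp only [Fin.sum_univ_five, b00, b01, b02, b03, b10, b11, b12, b13, b20, b21, b22,
      b23, b30, b31, b32, b33, map_zero, _root_.map_one, map_ofNat, Complex.conj_I,
      map_neg, map_div₀, Complex.conj_ofReal, zero_mul, mul_zero, add_zero, zero_add,
      one_mul, mul_one, neg_mul, mul_neg, neg_neg] at e00 e22 e33 e02 e03 e24 e34
    -- clean versions
    have E00 : u0 * (starRingEnd ℂ) u0 = 2 + (starRingEnd ℂ) w0 * w0 := by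
      linear_combination -e00 + Complex.I_mul_I
    have E22 : u2 * (starRingEnd ℂ) u2 = w2 * (starRingEnd ℂ) w2 := by
      linear_combination -e22
    have E33 : u3 * (starRingEnd ℂ) u3 = w3 * (starRingEnd ℂ) w3 := by
      linear_combination -e33
    have E02 : (starRingEnd ℂ) w0 * w2 = u0 * (starRingEnd ℂ) u2 := by
      first
      | linear_combination e02 + (1/((Real.sqrt 2:ℝ):ℂ))*Complex.I_mul_I
      | linear_combination e02 - (1/((Real.sqrt 2:ℝ):ℂ))*Complex.I_mul_I
    have E03 : (starRingEnd ℂ) w0 * w3 = u0 * (starRingEnd ℂ) u3 := by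
      linear_combination e03
    -- normSq / abs facts
    have n00 : Complex.normSq u0 = 2 + Complex.normSq w0 := by
      have h := E00
      rw [Complex.mul_conj, mul_comm ((starRingEnd ℂ) w0) w0, Complex.mul_conj] at h
      exact_mod_cast h
    have habs0 : ‖u0‖^2 = 2 + ‖w0‖^2 := by
      rw [Complex.sq_norm, Complex.sq_norm]; exact n00
    -- show u2 = 0 and w2 = 0
    have zkill : ∀ x y : ℂ, x * (starRingEnd ℂ) x = y * (starRingEnd ℂ) y →
        (starRingEnd ℂ) w0 * y = u0 * (starRingEnd ℂ) x → x = 0 ∧ y = 0 := by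
      intro x y hxy hcross
      have nxy : Complex.normSq x = Complex.normSq y := by
        rw [Complex.mul_conj, Complex.mul_conj] at hxy; exact_mod_cast hxy
      have haxy : ‖x‖ = ‖y‖ := by
        rw [Complex.norm_def, Complex.norm_def, nxy]
      have hca : ‖w0‖ * ‖y‖ = ‖u0‖ * ‖x‖ := by
        have := congrArg (‖·‖) hcross
        simpa [norm_mul, Complex.norm_conj] using this
      have hx0 : ‖x‖ = 0 := by
        by_contra hne
        rw [← haxy] at hca
        have heq : ‖w0‖ = ‖u0‖ := mul_right_cancel₀ hne hca
        rw [heq] at habs0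
        linarith
      constructor
      · exact norm_eq_zero.mp hx0
      · exact norm_eq_zero.mp (by rw [← haxy]; exact hx0)
    obtain ⟨hu2, hw2⟩ := zkill u2 w2 E22 E02
    obtain ⟨hu3, hw3⟩ := zkill u3 w3 E33 E03
    -- use e24, e34 with zeros
    rw [← hu0def, ← hu2def, ← hu3def, ← hw1def, ← hw2def, ← hw3def, ← hcdef] at e24 e34
    rw [hu2, hu3, hw2, hw3] at e24 e34
    simp only [map_zero, zero_mul, mul_zero, add_zero, zero_add, zero_div] at e24 e34
    have h2I : (2*I)*u0 = 0 := by
      first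
      | linear_combination e34 + I*e24
      | linear_combination e34 - I*e24
      | linear_combination -e34 + I*e24
    have hu0 : u0 = 0 := by
      rcases mul_eq_zero.mp h2I with h | h
      · exact absurd h (by simp [Complex.I_ne_zero])
      · exact h
    rw [hu0] at n00
    simp only [map_zero] at n00
    have := Complex.normSq_nonneg w0
    linarith
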